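/- If μ₁ and μ₂ are probability measures on [0,1/2] with μ₁ ≤ μ₂ in the convex order (∫ f dμ₁ ≤ ∫ f dμ₂ for all convex f), then for every n the probability of covering the circle of perimeter 1 by n i.i.d. uniformly-centered arcs with lengths distributed as μ₁ is at most the corresponding covering probability for μ₂: P(μ₁, n) ≤ P(μ₂, n). -/

import Mathlib

open MeasureTheory Set

/-- `n` arcs on the circle of perimeter `1`, the `i`-th with left endpoint (center) `c i` and
normalized length `ℓ i`, cover the whole circle. -/
def coversCircle {n : ℕ} (c : Fin n → AddCircle (1:ℝ)) (ℓ : Fin n → ℝ) : Prop :=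
  ∀ x : AddCircle (1:ℝ), ∃ i : Fin n, ∃ t : ℝ, t ∈ Set.Icc 0 (ℓ i) ∧
    x = c i + (t : AddCircle (1:ℝ))

/-- `P(ν, n)`: the probability that `n` i.i.d. arcs with independent uniformly distributed
positions, whose normalized lengths are i.i.d. with law `ν`, cover the circle of perimeter 1. -/
noncomputable def coverProb (ν : Measure ℝ) [SigmaFinite ν] (n : ℕ) : ℝ :=
  ((Measure.pi fun _ : Fin n => (volume : Measure (AddCircle (1:ℝ))).prod ν)
    {p | coversCircle (fun i => (p i).1) (fun i => (p i).2)}).toReal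

noncomputable section
namespace CircleCover

abbrev 𝕋 := AddCircle (1:ℝ)

def rep (z : 𝕋) : ℝ := ↑(AddCircle.equivIco 1 0 z)

lemma rep_mem (z : 𝕋) : rep z ∈ Ico (0:ℝ) 1 := by
  have h := (AddCircle.equivIco 1 0 z).2
  simpa [rep] using h

lemma coe_rep (z : 𝕋) : ((rep z : ℝ) : 𝕋) = z := (AddCircle.equivIco 1 0).symm_apply_apply z

lemma coe_eq_coe {x y : ℝ} : (x : 𝕋) = (y : 𝕋) ↔ ∃ k : ℤ, x - y = k := by
  constructor
  · intro h
    have : ((x - y : ℝ) : 𝕋) = 0 := by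
      rw [AddCircle.coe_sub, h, sub_self]
    rcases (AddCircle.coe_eq_zero_iff (1:ℝ)).mp this with ⟨n, hn⟩
    exact ⟨n, by simpa using hn.symm⟩
  · rintro ⟨k, hk⟩
    have hx : x = y + (k : ℝ) := by linarith
    rw [hx, AddCircle.coe_add]
    have h2 : (((k:ℝ)) : 𝕋) = 0 :=
      (AddCircle.coe_eq_zero_iff (p := (1:ℝ))).mpr ⟨k, by simp [zsmul_eq_mul]⟩
    rw [h2, add_zero]

lemma rep_coe_of_mem {w : ℝ} (hw : w ∈ Ico (0:ℝ) 1) : rep (w : 𝕋) = w := by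
  unfold rep AddCircle.equivIco
  rw [QuotientAddGroup.equivIcoMod_coe]
  exact (toIcoMod_eq_self (by norm_num)).mpr (by simpa using hw)

lemma arc_iff (x c : 𝕋) (ℓ : ℝ) :
    (∃ t : ℝ, t ∈ Icc 0 ℓ ∧ x = c + (t : 𝕋)) ↔ rep (x - c) ≤ ℓ := by
  constructor
  · rintro ⟨t, ⟨ht0, htl⟩, hx⟩
    have h1 : ((t : ℝ) : 𝕋) = ((rep (x - c) : ℝ) : 𝕋) := by
      rw [coe_rep, hx]; abel
    rcases coe_eq_coe.mp h1 with ⟨k, hk⟩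
    have hr := rep_mem (x - c)
    have hk0 : (0:ℤ) ≤ k := by
      have h3 : (-1 : ℝ) < (k : ℝ) := by
        have := hr.2; have := hr.1; linarith
      have h4 : (-1:ℤ) < k := by exact_mod_cast h3
      omega
    have : (0:ℝ) ≤ (k:ℝ) := by exact_mod_cast hk0
    linarith
  · intro h
    refine ⟨rep (x - c), ⟨(rep_mem _).1, h⟩, ?_⟩
    rw [coe_rep]; abel

lemma isClosed_arcSet (x : 𝕋) (ℓ : ℝ) : IsClosed {c : 𝕋 | rep (x - c) ≤ ℓ} := by
  rcases lt_or_ge ℓ 0 with hl | hl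
  · have : {c : 𝕋 | rep (x - c) ≤ ℓ} = ∅ := by
      ext c; simp only [mem_setOf_eq, mem_empty_iff_false, iff_false]
      intro h; exact absurd (le_trans (rep_mem (x - c)).1 h) (not_le.mpr hl)
    rw [this]; exact isClosed_empty
  · have hset : {c : 𝕋 | rep (x - c) ≤ ℓ} = (fun t : ℝ => x - (t : 𝕋)) '' Icc 0 ℓ := by
      ext c
      simp only [mem_setOf_eq, mem_image]
      constructor
      · intro h
        exact ⟨rep (x - c), ⟨(rep_mem _).1, h⟩, by rw [coe_rep]; abel⟩
      · rintro ⟨t, ⟨ht0, htl⟩, rfl⟩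
        have hxc : x - (x - (t:𝕋)) = (t : 𝕋) := by abel
        rw [hxc]
        rcases lt_or_ge t 1 with ht1 | ht1
        · rw [rep_coe_of_mem ⟨ht0, ht1⟩]; exact htl
        · calc rep ((t:𝕋)) ≤ 1 := le_of_lt (rep_mem _).2
            _ ≤ t := ht1
            _ ≤ ℓ := htl
    rw [hset]
    refine (isCompact_Icc.image ?_).isClosed
    exact continuous_const.sub (AddCircle.continuous_mk' (p := (1:ℝ)))

lemma measurable_rep : Measurable rep := by
  have h : Measurable fun z : 𝕋 => (AddCircle.measurableEquivIco (T := (1:ℝ)) 0 z : ℝ) :=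
    measurable_subtype_coe.comp (AddCircle.measurableEquivIco (T := (1:ℝ)) 0).measurable
  exact h

/-- The set of positions `c` such that the arc `[c, c+ℓ]` covers all of `K`. -/
def covSet (K : Set 𝕋) (ℓ : ℝ) : Set 𝕋 := {c | ∀ x ∈ K, rep (x - c) ≤ ℓ}

lemma isClosed_covSet (K : Set 𝕋) (ℓ : ℝ) : IsClosed (covSet K ℓ) := by
  have : covSet K ℓ = ⋂ x ∈ K, {c : 𝕋 | rep (x - c) ≤ ℓ} := by
    ext c; simp [covSet]
  rw [this]
  exact isClosed_biInter fun x _ => isClosed_arcSet x ℓ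

lemma rep_coe_of_mem' {w : ℝ} (hw : w ∈ Ico (1:ℝ) 2) : rep (w : 𝕋) = w - 1 := by
  have h : ((w : ℝ) : 𝕋) = ((w - 1 : ℝ) : 𝕋) := coe_eq_coe.mpr ⟨1, by push_cast; ring⟩
  rw [h, rep_coe_of_mem ⟨by linarith [hw.1], by linarith [hw.2]⟩]

lemma convexOn_congr {s : Set ℝ} {f g : ℝ → ℝ} (h : ∀ x ∈ s, f x = g x)
    (hg : ConvexOn ℝ s g) : ConvexOn ℝ s f :=
  ⟨hg.1, fun {x} hx {y} hy {p} {q} hp hq hpq => by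
    rw [h _ hx, h _ hy, h _ (hg.1 hx hy hp hq hpq)]
    exact hg.2 hx hy hp hq hpq⟩

lemma convexOn_shiftMax (s : ℝ) :
    ConvexOn ℝ (Icc (0:ℝ) (1/2)) (fun ℓ => max (ℓ - s) 0) := by
  have h1 : ConvexOn ℝ (Icc (0:ℝ) (1/2)) (fun ℓ : ℝ => ℓ - s) :=
    ⟨convex_Icc _ _, fun {x} _ {y} _ {p} {q} _ _ hpq => by
      simp only [smul_eq_mul]
      have : p * (x - s) + q * (y - s) = p * x + q * y - (p + q) * s := by ring
      rw [this, hpq]; simp [le_refl]⟩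
  have h2 : ConvexOn ℝ (Icc (0:ℝ) (1/2)) (fun _ : ℝ => (0:ℝ)) := convexOn_const 0 (convex_Icc _ _)
  have h3 := h1.sup h2
  exact convexOn_congr (fun x _ => by simp [max_def]) h3

theorem convexOn_vol_covSet (K : Set 𝕋) :
    ConvexOn ℝ (Icc (0:ℝ) (1/2)) (fun ℓ => (volume (covSet K ℓ)).toReal) := by
  rcases K.eq_empty_or_nonempty with hK | ⟨x₀, hx₀⟩
  · subst hK
    have hs : ∀ ℓ : ℝ, covSet (∅ : Set 𝕋) ℓ = univ := fun ℓ => by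
      ext c; simp [covSet]
    refine convexOn_congr (g := fun _ => (volume (univ : Set 𝕋)).toReal) (fun x _ => by rw [hs]) ?_
    exact convexOn_const _ (convex_Icc _ _)
  · set t₀ := rep x₀ with ht₀def
    have ht₀ : ((t₀ : ℝ) : 𝕋) = x₀ := coe_rep x₀
    set r : 𝕋 → ℝ := fun x => rep (x - x₀) with hrdef
    have hr0 : ∀ x, 0 ≤ r x := fun x => (rep_mem _).1
    have hr1 : ∀ x, r x < 1 := fun x => (rep_mem _).2
    have hrc : ∀ x : 𝕋, ((r x : ℝ) : 𝕋) = x - x₀ := fun x => coe_rep _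
    set SA : Set ℝ := insert 0 {ρ | ∃ x ∈ K, r x = ρ ∧ ρ ≤ 1/2} with hSAdef
    set SB : Set ℝ := insert 0 {ρ | ∃ x ∈ K, 1 - r x = ρ ∧ 1/2 < r x} with hSBdef
    have hSA_ne : SA.Nonempty := ⟨0, mem_insert 0 _⟩
    have hSB_ne : SB.Nonempty := ⟨0, mem_insert 0 _⟩
    have hSA_half : ∀ ρ ∈ SA, ρ ≤ 1/2 := by
      rintro ρ (rfl | ⟨x, hx, rfl, h⟩)
      · norm_num
      · exact h
    have hSB_half : ∀ ρ ∈ SB, ρ ≤ 1/2 := by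
      rintro ρ (rfl | ⟨x, hx, rfl, h⟩)
      · norm_num
      · linarith
    have hSA_bdd : BddAbove SA := ⟨1/2, fun ρ hρ => hSA_half ρ hρ⟩
    have hSB_bdd : BddAbove SB := ⟨1/2, fun ρ hρ => hSB_half ρ hρ⟩
    set a := sSup SA with hadef
    set b := sSup SB with hbdef
    have ha0 : 0 ≤ a := le_csSup hSA_bdd (mem_insert 0 _)
    have hb0 : 0 ≤ b := le_csSup hSB_bdd (mem_insert 0 _)
    have ha2 : a ≤ 1/2 := csSup_le hSA_ne hSA_half
    have hb2 : b ≤ 1/2 := csSup_le hSB_ne hSB_half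
    -- translation lemma
    have htrans : ∀ (x : 𝕋) (v : ℝ), x - ((v : ℝ) : 𝕋) = ((r x + (t₀ - v) : ℝ) : 𝕋) := by
      intro x v
      rw [AddCircle.coe_add, AddCircle.coe_sub, hrc, ht₀]
      abel
    have hrx₀ : r x₀ = 0 := by
      have : x₀ - x₀ = ((0:ℝ) : 𝕋) := by
        rw [sub_self]; norm_cast
      rw [hrdef]; simp only
      rw [this, rep_coe_of_mem (by constructor <;> norm_num)]
    have key : ∀ ℓ ∈ Icc (0:ℝ) (1/2),
        volume (covSet K ℓ) = ENNReal.ofReal (ℓ - (a + b)) := by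
      rintro ℓ ⟨hℓ0, hℓ2⟩
      have hmeasA : MeasurableSet (covSet K ℓ) := (isClosed_covSet K ℓ).measurableSet
      have step1 := AddCircle.add_projection_respects_measure (T := (1:ℝ)) (t₀ - 1) hmeasA
      have honen : t₀ - 1 + 1 = t₀ := by ring
      rw [honen] at step1
      set I : Set ℝ := QuotientAddGroup.mk ⁻¹' (covSet K ℓ) ∩ Ioc (t₀ - 1) t₀ with hIdef
      have claim1 : Ioo (t₀ - ℓ + a) (t₀ - b) ⊆ I := by
        rintro v ⟨hv1, hv2⟩
        have hub : b < t₀ - v := by linarith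
        have hua : t₀ - v < ℓ - a := by linarith
        constructor
        · -- mk v ∈ covSet K ℓ
          intro x hx
          have heq : x - ((v : ℝ) : 𝕋) = ((r x + (t₀ - v) : ℝ) : 𝕋) := htrans x v
          rcases le_or_gt (r x) (1/2) with hrx | hrx
          · have hra : r x ≤ a := le_csSup hSA_bdd (Or.inr ⟨x, hx, rfl, hrx⟩)
            have hw : r x + (t₀ - v) ∈ Ico (0:ℝ) 1 := by
              constructor
              · have := hr0 x; linarith
              · linarith
            rw [heq, rep_coe_of_mem hw]
            linarith
          · have hxb : 1 - r x ≤ b := le_csSup hSB_bdd (Or.inr ⟨x, hx, rfl, hrx⟩)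
            have hw : r x + (t₀ - v) ∈ Ico (1:ℝ) 2 := by
              constructor
              · linarith
              · have := hr1 x; linarith
            rw [heq, rep_coe_of_mem' hw]
            have := hr1 x
            linarith
        · exact ⟨by linarith, by linarith⟩
      have claim2 : I ⊆ Icc (t₀ - ℓ + a) (t₀ - b) ∪ {t₀ - ℓ} := by
        rintro v ⟨hvA, hv1, hv2⟩
        have hu0 : 0 ≤ t₀ - v := by linarith
        have hu1 : t₀ - v < 1 := by linarith
        have hcov : ∀ x ∈ K, rep (((r x + (t₀ - v) : ℝ) : 𝕋)) ≤ ℓ := by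
          intro x hx
          have := hvA x hx
          rwa [htrans x v] at this
        have hul : t₀ - v ≤ ℓ := by
          have h0 := hcov x₀ hx₀
          rw [hrx₀, zero_add, rep_coe_of_mem ⟨hu0, hu1⟩] at h0
          exact h0
        rcases eq_or_lt_of_le hul with huleq | hult
        · right
          simp only [mem_singleton_iff]
          linarith
        · left
          constructor
          · -- a ≤ ℓ - (t₀ - v)
            have : a ≤ ℓ - (t₀ - v) := by
              apply csSup_le hSA_ne
              rintro ρ (rfl | ⟨x, hx, rfl, hrx⟩)
              · linarith
              · by_cases hw : r x + (t₀ - v) < 1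
                · have := hcov x hx
                  rw [rep_coe_of_mem ⟨by have := hr0 x; linarith, hw⟩] at this
                  linarith
                · exfalso; push_neg at hw; linarith
            linarith
          · -- b ≤ t₀ - v
            have : b ≤ t₀ - v := by
              apply csSup_le hSB_ne
              rintro ρ (rfl | ⟨x, hx, rfl, hrx⟩)
              · linarith
              · by_cases hw : r x + (t₀ - v) < 1
                · exfalso
                  have := hcov x hx
                  rw [rep_coe_of_mem ⟨by have := hr0 x; linarith, hw⟩] at this
                  linarith
                · push_neg at hw; linarith
            linarith
      have hvol_le : volume I ≤ ENNReal.ofReal ((t₀ - b) - (t₀ - ℓ + a)) := by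
        calc volume I ≤ volume (Icc (t₀ - ℓ + a) (t₀ - b) ∪ {t₀ - ℓ}) := measure_mono claim2
          _ ≤ volume (Icc (t₀ - ℓ + a) (t₀ - b)) + volume ({t₀ - ℓ} : Set ℝ) := measure_union_le _ _
          _ = ENNReal.ofReal ((t₀ - b) - (t₀ - ℓ + a)) := by
              rw [Real.volume_Icc, Real.volume_singleton, add_zero]
      have hvol_ge : ENNReal.ofReal ((t₀ - b) - (t₀ - ℓ + a)) ≤ volume I := by
        calc ENNReal.ofReal ((t₀ - b) - (t₀ - ℓ + a)) = volume (Ioo (t₀ - ℓ + a) (t₀ - b)) := by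
              rw [Real.volume_Ioo]
          _ ≤ volume I := measure_mono claim1
      have : volume I = ENNReal.ofReal ((t₀ - b) - (t₀ - ℓ + a)) := le_antisymm hvol_le hvol_ge
      rw [step1, this]
      congr 1
      ring
    refine convexOn_congr (g := fun ℓ => max (ℓ - (a + b)) 0) ?_ (convexOn_shiftMax (a + b))
    intro ℓ hℓ
    rw [key ℓ hℓ, ENNReal.toReal_ofReal']

instance : IsProbabilityMeasure (volume : Measure 𝕋) :=
  ⟨by rw [AddCircle.measure_univ]; norm_num⟩

lemma isClosed_arc (c : 𝕋) (ℓ : ℝ) : IsClosed {y : 𝕋 | rep (y - c) ≤ ℓ} := by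
  rcases lt_or_ge ℓ 0 with hl | hl
  · have h : {y : 𝕋 | rep (y - c) ≤ ℓ} = ∅ := by
      ext y; simp only [mem_setOf_eq, mem_empty_iff_false, iff_false]
      intro h; exact absurd (le_trans (rep_mem (y - c)).1 h) (not_le.mpr hl)
    rw [h]; exact isClosed_empty
  · have hset : {y : 𝕋 | rep (y - c) ≤ ℓ} = (fun t : ℝ => c + (t : 𝕋)) '' Icc 0 ℓ := by
      ext y
      simp only [mem_setOf_eq, mem_image]
      constructor
      · intro h
        exact ⟨rep (y - c), ⟨(rep_mem _).1, h⟩, by rw [coe_rep]; abel⟩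
      · rintro ⟨t, ⟨ht0, htl⟩, rfl⟩
        have hyc : c + (t:𝕋) - c = ((t : ℝ) : 𝕋) := by abel
        rw [hyc]
        rcases lt_or_ge t 1 with ht1 | ht1
        · rw [rep_coe_of_mem ⟨ht0, ht1⟩]; exact htl
        · calc rep ((t:ℝ) : 𝕋) ≤ 1 := le_of_lt (rep_mem _).2
            _ ≤ t := ht1
            _ ≤ ℓ := htl
    rw [hset]
    exact (isCompact_Icc.image
      (continuous_const.add (AddCircle.continuous_mk' (p := (1:ℝ))))).isClosed

lemma coversCircle_iff {n : ℕ} (c : Fin n → 𝕋) (ℓ : Fin n → ℝ) :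
    coversCircle c ℓ ↔ ∀ x : 𝕋, ∃ i, rep (x - c i) ≤ ℓ i :=
  forall_congr' fun x => exists_congr fun i => arc_iff x (c i) (ℓ i)

def coverEvent (n : ℕ) : Set (Fin n → 𝕋 × ℝ) :=
  {p | coversCircle (fun i => (p i).1) (fun i => (p i).2)}

lemma measurableSet_coverEvent (n : ℕ) : MeasurableSet (coverEvent n) := by
  obtain ⟨D, hDc, hDd⟩ := TopologicalSpace.exists_countable_dense 𝕋
  have hE : coverEvent n =
      ⋂ x ∈ D, ⋃ i : Fin n, {p : Fin n → 𝕋 × ℝ | rep (x - (p i).1) ≤ (p i).2} := by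
    ext p
    simp only [coverEvent, mem_setOf_eq, coversCircle_iff, mem_iInter, mem_iUnion, mem_setOf_eq]
    constructor
    · intro h x _; exact h x
    · intro h x
      have hU : IsClosed (⋃ i : Fin n, {y : 𝕋 | rep (y - (p i).1) ≤ (p i).2}) :=
        isClosed_iUnion_of_finite fun i => isClosed_arc _ _
      have hDU : D ⊆ ⋃ i : Fin n, {y : 𝕋 | rep (y - (p i).1) ≤ (p i).2} := by
        intro d hd
        rcases h d hd with ⟨i, hi⟩
        exact mem_iUnion.mpr ⟨i, hi⟩
      have huniv : (univ : Set 𝕋) ⊆ ⋃ i : Fin n, {y : 𝕋 | rep (y - (p i).1) ≤ (p i).2} := by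
        rw [← hDd.closure_eq]
        exact closure_minimal hDU hU
      exact mem_iUnion.mp (huniv (mem_univ x))
  rw [hE]
  refine MeasurableSet.biInter hDc fun x _ => MeasurableSet.iUnion fun i => ?_
  exact measurableSet_le
    (measurable_rep.comp (Measurable.const_sub (Measurable.fst (measurable_pi_apply i)) x))
    (Measurable.snd (measurable_pi_apply i))

theorem main_step {Ω : Type*} [MeasurableSpace Ω] (P : Measure Ω) [IsProbabilityMeasure P]
    (μ₁ μ₂ : Measure ℝ) [IsProbabilityMeasure μ₁] [IsProbabilityMeasure μ₂]
    (hcv : ∀ f : ℝ → ℝ, ConvexOn ℝ (Icc (0:ℝ) (1/2)) f →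
      Integrable f μ₁ → Integrable f μ₂ → ∫ x, f x ∂μ₁ ≤ ∫ x, f x ∂μ₂)
    (E' : Set ((𝕋 × ℝ) × Ω)) (hE' : MeasurableSet E')
    (hconv : ∀ ω : Ω, ConvexOn ℝ (Icc (0:ℝ) (1/2))
      fun ℓ => (volume {c : 𝕋 | ((c, ℓ), ω) ∈ E'}).toReal) :
    ((((volume : Measure 𝕋).prod μ₁).prod P) E').toReal ≤
      ((((volume : Measure 𝕋).prod μ₂).prod P) E').toReal := by
  have hEtm : MeasurableSet {q : ℝ × (𝕋 × Ω) | ((q.2.1, q.1), q.2.2) ∈ E'} := by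
    have hφ : Measurable fun q : ℝ × (𝕋 × Ω) => ((q.2.1, q.1), q.2.2) :=
      (Measurable.prodMk (Measurable.prodMk measurable_snd.fst measurable_fst)
        measurable_snd.snd)
    exact hφ hE'
  set Et : Set (ℝ × (𝕋 × Ω)) := {q | ((q.2.1, q.1), q.2.2) ∈ E'} with hEtdef
  set G : ℝ → ENNReal := fun ℓ => (((volume : Measure 𝕋).prod P) (Prod.mk ℓ ⁻¹' Et)) with hGdef
  have hGmeas : Measurable G := measurable_measure_prodMk_left hEtm
  have hG1 : ∀ ℓ, G ℓ ≤ 1 := fun ℓ => prob_le_one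
  have hsecm : ∀ ℓ : ℝ, MeasurableSet (Prod.mk ℓ ⁻¹' Et) :=
    fun ℓ => measurable_prodMk_left hEtm
  have hid : ∀ (μ : Measure ℝ), IsProbabilityMeasure μ →
      (((volume : Measure 𝕋).prod μ).prod P) E' = ∫⁻ ℓ, G ℓ ∂μ := by
    intro μ hμ
    have hf : Measurable fun z : 𝕋 × ℝ => P (Prod.mk z ⁻¹' E') :=
      measurable_measure_prodMk_left hE'
    rw [Measure.prod_apply hE', lintegral_prod _ hf.aemeasurable,
      lintegral_lintegral_swap hf.aemeasurable]
    refine lintegral_congr fun ℓ => ?_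
    rw [hGdef]
    simp only
    rw [Measure.prod_apply (hsecm ℓ)]
    rfl
  have hωmeas : ∀ ℓ : ℝ, Measurable fun ω => volume {c : 𝕋 | ((c, ℓ), ω) ∈ E'} := by
    intro ℓ
    exact measurable_measure_prodMk_right (hsecm ℓ)
  have hGint : ∀ ℓ : ℝ, G ℓ = ∫⁻ ω, volume {c : 𝕋 | ((c, ℓ), ω) ∈ E'} ∂P :=
    fun ℓ => Measure.prod_apply_symm (hsecm ℓ)
  set g : ℝ → ℝ := fun ℓ => (G ℓ).toReal with hgdef
  have hgmeas : Measurable g := hGmeas.ennreal_toReal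
  have hgnn : ∀ ℓ, 0 ≤ g ℓ := fun ℓ => ENNReal.toReal_nonneg
  have hg1 : ∀ ℓ, g ℓ ≤ 1 := by
    intro ℓ
    have := ENNReal.toReal_mono ENNReal.one_ne_top (hG1 ℓ)
    simpa using this
  set F : ℝ → Ω → ℝ := fun ℓ ω => (volume {c : 𝕋 | ((c, ℓ), ω) ∈ E'}).toReal with hFdef
  have hFint : ∀ ℓ, Integrable (F ℓ) P := by
    intro ℓ
    refine Integrable.mono' (integrable_const 1)
      ((hωmeas ℓ).ennreal_toReal.aestronglyMeasurable) ?_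
    refine Filter.Eventually.of_forall fun ω => ?_
    rw [Real.norm_eq_abs, abs_of_nonneg ENNReal.toReal_nonneg]
    have h1 : volume {c : 𝕋 | ((c, ℓ), ω) ∈ E'} ≤ 1 := prob_le_one
    have := ENNReal.toReal_mono ENNReal.one_ne_top h1
    simpa using this
  have hgF : ∀ ℓ, g ℓ = ∫ ω, F ℓ ω ∂P := by
    intro ℓ
    rw [hgdef]
    simp only
    rw [hGint ℓ, ← integral_toReal (hωmeas ℓ).aemeasurable
      (Filter.Eventually.of_forall fun ω => lt_of_le_of_lt prob_le_one ENNReal.one_lt_top)]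
  have hgconv : ConvexOn ℝ (Icc (0:ℝ) (1/2)) g := by
    refine convexOn_congr (g := fun ℓ => ∫ ω, F ℓ ω ∂P) (fun ℓ _ => hgF ℓ) ?_
    refine ⟨convex_Icc _ _, fun {x} hx {y} hy {p} {q} hp hq hpq => ?_⟩
    calc ∫ ω, F (p • x + q • y) ω ∂P
        ≤ ∫ ω, (p • F x ω + q • F y ω) ∂P := by
          refine integral_mono (hFint _) (((hFint x).smul p).add ((hFint y).smul q))
            fun ω => ?_
          exact (hconv ω).2 hx hy hp hq hpq
      _ = p • ∫ ω, F x ω ∂P + q • ∫ ω, F y ω ∂P := by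
          have h1 : Integrable (fun ω => p • F x ω) P := (hFint x).smul p
          have h2 : Integrable (fun ω => q • F y ω) P := (hFint y).smul q
          rw [integral_add h1 h2, integral_smul, integral_smul]
  have hgint : ∀ (μ : Measure ℝ), IsProbabilityMeasure μ → Integrable g μ := by
    intro μ hμ
    refine Integrable.mono' (integrable_const 1) hgmeas.aestronglyMeasurable ?_
    exact Filter.Eventually.of_forall fun ℓ => by
      rw [Real.norm_eq_abs, abs_of_nonneg (hgnn ℓ)]; exact hg1 ℓ
  have hteq : ∀ (μ : Measure ℝ), IsProbabilityMeasure μ →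
      ((((volume : Measure 𝕋).prod μ).prod P) E').toReal = ∫ ℓ, g ℓ ∂μ := by
    intro μ hμ
    rw [hid μ hμ, ← integral_toReal hGmeas.aemeasurable
      (Filter.Eventually.of_forall fun ℓ => lt_of_le_of_lt (hG1 ℓ) ENNReal.one_lt_top)]
  rw [hteq μ₁ inferInstance, hteq μ₂ inferInstance]
  exact hcv g hgconv (hgint μ₁ inferInstance) (hgint μ₂ inferInstance)

theorem step_lemma {n : ℕ} (μ₁ μ₂ : Measure ℝ) [IsProbabilityMeasure μ₁]
    [IsProbabilityMeasure μ₂]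
    (hcv : ∀ f : ℝ → ℝ, ConvexOn ℝ (Icc (0:ℝ) (1/2)) f →
      Integrable f μ₁ → Integrable f μ₂ → ∫ x, f x ∂μ₁ ≤ ∫ x, f x ∂μ₂)
    (k : ℕ) (hk : k < n) (ν ν' : Fin n → Measure ℝ)
    [hνp : ∀ j, IsProbabilityMeasure (ν j)] [hν'p : ∀ j, IsProbabilityMeasure (ν' j)]
    (hν : ∀ j : Fin n, ν j = if (j : ℕ) < k then μ₂ else μ₁)
    (hν' : ∀ j : Fin n, ν' j = if (j : ℕ) < k + 1 then μ₂ else μ₁) :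
    ((Measure.pi fun j => (volume : Measure 𝕋).prod (ν j)) (coverEvent n)).toReal ≤
      ((Measure.pi fun j => (volume : Measure 𝕋).prod (ν' j)) (coverEvent n)).toReal := by
  cases n with
  | zero => omega
  | succ N =>
    set i : Fin (N + 1) := ⟨k, hk⟩ with hidef
    set e := MeasurableEquiv.piFinSuccAbove (fun _ : Fin (N + 1) => 𝕋 × ℝ) i with hedef
    set E' : Set ((𝕋 × ℝ) × (Fin N → 𝕋 × ℝ)) := e.symm ⁻¹' (coverEvent (N + 1)) with hE'def
    have hE'm : MeasurableSet E' := e.symm.measurable (measurableSet_coverEvent _)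
    have hpre : e ⁻¹' E' = coverEvent (N + 1) := by
      rw [hE'def, ← preimage_comp]
      have : (e.symm ∘ e) = id := by
        funext z; exact e.symm_apply_apply z
      rw [this, preimage_id]
    set Q := Measure.pi fun j : Fin N => (volume : Measure 𝕋).prod (ν (i.succAbove j)) with hQdef
    have hQ' : (Measure.pi fun j : Fin N => (volume : Measure 𝕋).prod (ν' (i.succAbove j))) = Q := by
      rw [hQdef]
      congr 1
      funext j
      congr 1
      have hne : ((i.succAbove j : Fin (N+1)) : ℕ) ≠ k := by
        intro h
        exact Fin.succAbove_ne i j (Fin.ext h)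
      rw [hν, hν']
      by_cases hlt : ((i.succAbove j : Fin (N+1)) : ℕ) < k
      · rw [if_pos hlt, if_pos (by omega)]
      · rw [if_neg hlt, if_neg (by omega)]
    have hνi : ν i = μ₁ := by rw [hν]; exact if_neg (by simp [hidef])
    have hν'i : ν' i = μ₂ := by rw [hν']; exact if_pos (by simp [hidef])
    have mp1 := measurePreserving_piFinSuccAbove
      (fun j : Fin (N+1) => (volume : Measure 𝕋).prod (ν j)) i
    have mp2 := measurePreserving_piFinSuccAbove
      (fun j : Fin (N+1) => (volume : Measure 𝕋).prod (ν' j)) i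
    have heq1 : (Measure.pi fun j => (volume : Measure 𝕋).prod (ν j)) (coverEvent (N+1))
        = (((volume : Measure 𝕋).prod μ₁).prod Q) E' := by
      calc (Measure.pi fun j => (volume : Measure 𝕋).prod (ν j)) (coverEvent (N+1))
          = (Measure.pi fun j => (volume : Measure 𝕋).prod (ν j)) (e ⁻¹' E') := by rw [hpre]
        _ = (Measure.map e (Measure.pi fun j => (volume : Measure 𝕋).prod (ν j))) E' :=
            (MeasurableEquiv.map_apply e E').symm
        _ = (((volume : Measure 𝕋).prod μ₁).prod Q) E' := by
            rw [mp1.map_eq, hνi, hQdef]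
    have heq2 : (Measure.pi fun j => (volume : Measure 𝕋).prod (ν' j)) (coverEvent (N+1))
        = (((volume : Measure 𝕋).prod μ₂).prod Q) E' := by
      calc (Measure.pi fun j => (volume : Measure 𝕋).prod (ν' j)) (coverEvent (N+1))
          = (Measure.pi fun j => (volume : Measure 𝕋).prod (ν' j)) (e ⁻¹' E') := by rw [hpre]
        _ = (Measure.map e (Measure.pi fun j => (volume : Measure 𝕋).prod (ν' j))) E' :=
            (MeasurableEquiv.map_apply e E').symm
        _ = (((volume : Measure 𝕋).prod μ₂).prod Q) E' := by
            rw [mp2.map_eq, hν'i, hQ']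
    rw [heq1, heq2]
    refine main_step Q μ₁ μ₂ hcv E' hE'm ?_
    intro ω
    have hset : ∀ ℓ : ℝ, {c : 𝕋 | ((c, ℓ), ω) ∈ E'} =
        covSet {x : 𝕋 | ∀ j : Fin N, ¬ rep (x - (ω j).1) ≤ (ω j).2} ℓ := by
      intro ℓ
      ext c
      simp only [hE'def, mem_setOf_eq, mem_preimage]
      have hsymm : e.symm ((c, ℓ), ω) = i.insertNth (c, ℓ) ω := by
        rw [hedef, MeasurableEquiv.piFinSuccAbove_symm_apply]
        funext j
        rw [Fin.insertNthEquiv_apply]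
      rw [hsymm]
      show coversCircle _ _ ↔ _
      rw [coversCircle_iff]
      simp only [covSet, mem_setOf_eq]
      constructor
      · intro h x hx
        rcases h x with ⟨j, hj⟩
        rcases eq_or_ne j i with rfl | hji
        · rwa [Fin.insertNth_apply_same] at hj
        · rcases Fin.exists_succAbove_eq hji with ⟨j', rfl⟩
          rw [Fin.insertNth_apply_succAbove] at hj
          exact absurd hj (hx j')
      · intro h x
        by_cases hx : ∀ j : Fin N, ¬ rep (x - (ω j).1) ≤ (ω j).2
        · exact ⟨i, by rw [Fin.insertNth_apply_same]; exact h x hx⟩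
        · push_neg at hx
          rcases hx with ⟨j', hj'⟩
          exact ⟨i.succAbove j', by rw [Fin.insertNth_apply_succAbove]; exact hj'⟩
    exact convexOn_congr (fun ℓ _ => by rw [hset ℓ]) (convexOn_vol_covSet _)

end CircleCover

theorem coverProb_mono_of_convex_order (μ₁ μ₂ : Measure ℝ)
    [IsProbabilityMeasure μ₁] [IsProbabilityMeasure μ₂]
    (h₁ : μ₁ (Set.Icc (0:ℝ) (1/2)) = 1) (h₂ : μ₂ (Set.Icc (0:ℝ) (1/2)) = 1)
    (hcv : ∀ f : ℝ → ℝ, ConvexOn ℝ (Set.Icc (0:ℝ) (1/2)) f →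
      Integrable f μ₁ → Integrable f μ₂ → ∫ x, f x ∂μ₁ ≤ ∫ x, f x ∂μ₂)
    (n : ℕ) : coverProb μ₁ n ≤ coverProb μ₂ n := by
  classical
  open CircleCover in
  let ν : ℕ → Fin n → Measure ℝ := fun k j => if (j : ℕ) < k then μ₂ else μ₁
  haveI hνp : ∀ k (j : Fin n), IsProbabilityMeasure (ν k j) := by
    intro k j
    simp only [ν]
    split_ifs <;> infer_instance
  have hchain : ∀ k, k ≤ n →
      ((Measure.pi fun j => (volume : Measure CircleCover.𝕋).prod (ν 0 j))
        (CircleCover.coverEvent n)).toReal ≤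
      ((Measure.pi fun j => (volume : Measure CircleCover.𝕋).prod (ν k j))
        (CircleCover.coverEvent n)).toReal := by
    intro k
    induction k with
    | zero => intro _; exact le_refl _
    | succ k ih =>
      intro hk
      refine le_trans (ih (by omega)) ?_
      exact CircleCover.step_lemma μ₁ μ₂ hcv k (by omega) (ν k) (ν (k+1))
        (fun j => rfl) (fun j => rfl)
  have h0 : (Measure.pi fun j : Fin n => (volume : Measure CircleCover.𝕋).prod (ν 0 j)) =
      (Measure.pi fun _ : Fin n => (volume : Measure CircleCover.𝕋).prod μ₁) := by
    have e : (fun j : Fin n => (volume : Measure CircleCover.𝕋).prod (ν 0 j)) =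
        (fun _ : Fin n => (volume : Measure CircleCover.𝕋).prod μ₁) := by
      funext j
      rw [show ν 0 j = μ₁ from if_neg (Nat.not_lt_zero _)]
    rw [e]
  have hn : (Measure.pi fun j : Fin n => (volume : Measure CircleCover.𝕋).prod (ν n j)) =
      (Measure.pi fun _ : Fin n => (volume : Measure CircleCover.𝕋).prod μ₂) := by
    have e : (fun j : Fin n => (volume : Measure CircleCover.𝕋).prod (ν n j)) =
        (fun _ : Fin n => (volume : Measure CircleCover.𝕋).prod μ₂) := by
      funext j
      rw [show ν n j = μ₂ from if_pos j.isLt]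
    rw [e]
  have hfinal := hchain n le_rfl
  rw [h0, hn] at hfinal
  exact hfinal
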